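/- (Output error bound for pH-OpInf-DEIM.) Under the setting of the state error bound — Φ ∈ ℝⁿˣʳ with ΦᵀΦ = I_r; H(x) = (1/2)xᵀQx + cᵀh(x) with Q symmetric, ∇H(x) = Qx + J_h(x)ᵀc, and ∇H and J_h Lipschitz with constants C_Lip[∇H], C_Lip[J_h]; Ψ ∈ ℝᵈˣᵐ⁰ with orthonormal columns, P a selection matrix with PᵀΨ invertible, ℙ = Ψ(PᵀΨ)⁻¹Pᵀ; Q_r = ΦᵀQΦ, B_r ∈ ℝʳˣᵐ — let x: [0,T] → ℝⁿ and y: [0,T] → ℝᵐ be continuous, let x_r: [0,T] → ℝʳ be continuous, and set y_r(t) := B_rᵀ(Q_r x_r(t) + Φᵀ J_h(Φ x_r(t))ᵀ ℙᵀ c). Define C₄ := ‖B_rᵀΦᵀ‖·C_Lip[∇H], C₅ := ‖B_r‖·‖c‖, C₆ := ‖B_rᵀΦᵀ‖·(‖Q‖ + C_Lip[J_h]·‖(PᵀΨ)⁻¹‖·‖c‖), and C := 4·max{1, C₄², C₅², C₆²}. Then ∫₀ᵀ ‖y(t) − y_r(t)‖² dt ≤ C·( ∫₀ᵀ ‖x(t)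 − Φx_r(t)‖² dt + ∫₀ᵀ ‖y(t) − B_rᵀΦᵀ∇H(x(t))‖² dt + ∫₀ᵀ ‖(I − ℙ)J_h(ΦΦᵀx(t))Φ‖² dt ). -/

import Mathlib

open Matrix MeasureTheory RealInnerProductSpace

noncomputable section

/-- Euclidean space `ℝⁿ`. -/
abbrev Evec (n : ℕ) := EuclideanSpace ℝ (Fin n)

/-- Matrix-vector product on Euclidean spaces. -/
def mv {a b : ℕ} (M : Matrix (Fin a) (Fin b) ℝ) (v : Evec b) : Evec a := WithLp.toLp 2 (M.mulVec v)

/-- Spectral (operator) norm of a real matrix, viewed as a linear map between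
Euclidean spaces. -/
def spec {a b : ℕ} (M : Matrix (Fin a) (Fin b) ℝ) : ℝ :=
  ‖LinearMap.toContinuousLinearMap (Matrix.toEuclideanLin M)‖

lemma toCLM_apply {a b : ℕ} (M : Matrix (Fin a) (Fin b) ℝ) (v : Evec b) :
    LinearMap.toContinuousLinearMap (Matrix.toEuclideanLin M) v = mv M v := rfl

lemma norm_mv_le {a b : ℕ} (M : Matrix (Fin a) (Fin b) ℝ) (v : Evec b) :
    ‖mv M v‖ ≤ spec M * ‖v‖ := by
  rw [← toCLM_apply]; exact (LinearMap.toContinuousLinearMap (Matrix.toEuclideanLin M)).le_opNorm v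

lemma spec_nonneg {a b : ℕ} (M : Matrix (Fin a) (Fin b) ℝ) : 0 ≤ spec M := norm_nonneg _

lemma spec_le_of_bound {a b : ℕ} (M : Matrix (Fin a) (Fin b) ℝ) {K : ℝ} (hK : 0 ≤ K)
    (hb : ∀ v, ‖mv M v‖ ≤ K * ‖v‖) : spec M ≤ K :=
  ContinuousLinearMap.opNorm_le_bound _ hK hb

lemma mv_mv {a b c : ℕ} (M : Matrix (Fin a) (Fin b) ℝ) (N : Matrix (Fin b) (Fin c) ℝ)
    (v : Evec c) : mv M (mv N v) = mv (M * N) v := by simp [mv, Matrix.mulVec_mulVec]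

lemma mv_add {a b : ℕ} (M : Matrix (Fin a) (Fin b) ℝ) (u v : Evec b) :
    mv M (u + v) = mv M u + mv M v := by simp [mv, Matrix.mulVec_add]

lemma mv_sub {a b : ℕ} (M : Matrix (Fin a) (Fin b) ℝ) (u v : Evec b) :
    mv M (u - v) = mv M u - mv M v := by simp [mv, Matrix.mulVec_sub]

lemma add_mv {a b : ℕ} (M N : Matrix (Fin a) (Fin b) ℝ) (v : Evec b) :
    mv (M + N) v = mv M v + mv N v := by simp [mv, Matrix.add_mulVec]

lemma sub_mv {a b : ℕ} (M N : Matrix (Fin a) (Fin b) ℝ) (v : Evec b) :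
    mv (M - N) v = mv M v - mv N v := by simp [mv, Matrix.sub_mulVec]

lemma spec_mul_le {a b c : ℕ} (M : Matrix (Fin a) (Fin b) ℝ) (N : Matrix (Fin b) (Fin c) ℝ) :
    spec (M * N) ≤ spec M * spec N := by
  apply spec_le_of_bound _ (mul_nonneg (spec_nonneg M) (spec_nonneg N))
  intro v
  rw [← mv_mv]
  calc ‖mv M (mv N v)‖ ≤ spec M * ‖mv N v‖ := norm_mv_le _ _
    _ ≤ spec M * (spec N * ‖v‖) := by
        exact mul_le_mul_of_nonneg_left (norm_mv_le _ _) (spec_nonneg M)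
    _ = spec M * spec N * ‖v‖ := by ring

lemma spec_sub_le {a b : ℕ} (M N : Matrix (Fin a) (Fin b) ℝ) :
    spec M - spec N ≤ spec (M - N) := by
  have : (LinearMap.toContinuousLinearMap (Matrix.toEuclideanLin (M - N))) =
      LinearMap.toContinuousLinearMap (Matrix.toEuclideanLin M) -
      LinearMap.toContinuousLinearMap (Matrix.toEuclideanLin N) := by
    ext v; simp [toCLM_apply, sub_mv]
  unfold spec
  rw [this]
  exact norm_sub_norm_le _ _

lemma inner_mv {a b : ℕ} (M : Matrix (Fin a) (Fin b) ℝ) (u : Evec a) (v : Evec b) :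
    ⟪mv Mᵀ u, v⟫ = ⟪u, mv M v⟫ := by
  simp only [PiLp.inner_apply, RCLike.inner_apply, conj_trivial]
  simp only [mv, Matrix.mulVec, dotProduct, Matrix.transpose_apply, Finset.mul_sum,
    Finset.sum_mul]
  rw [Finset.sum_comm]
  congr 1; ext i; congr 1; ext j; ring

lemma norm_sq_eq_inner' {a : ℕ} (v : Evec a) : ‖v‖ ^ 2 = ⟪v, v⟫ :=
  (real_inner_self_eq_norm_sq v).symm

lemma norm_mv_orth {nn rr : ℕ} (Φ : Matrix (Fin nn) (Fin rr) ℝ) (hΦ : Φᵀ * Φ = 1)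
    (v : Evec rr) : ‖mv Φ v‖ = ‖v‖ := by
  have h2 : ‖mv Φ v‖ ^ 2 = ‖v‖ ^ 2 := by
    rw [norm_sq_eq_inner', norm_sq_eq_inner', ← inner_mv, mv_mv, hΦ]
    congr 1
    simp [mv]
  have := abs_eq_abs.mpr (Or.inl (by nlinarith [sq_abs ‖mv Φ v‖, sq_abs ‖v‖] : |‖mv Φ v‖| ^ 2 = |‖v‖| ^ 2))
  nlinarith [norm_nonneg (mv Φ v), norm_nonneg v]

lemma spec_transpose_le {a b : ℕ} (M : Matrix (Fin a) (Fin b) ℝ) : spec Mᵀ ≤ spec M := by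
  apply spec_le_of_bound _ (spec_nonneg M)
  intro v
  rcases eq_or_ne (‖mv Mᵀ v‖) 0 with h0 | h0
  · rw [h0]; exact mul_nonneg (spec_nonneg M) (norm_nonneg v)
  · have key : ‖mv Mᵀ v‖ ^ 2 ≤ spec M * ‖mv Mᵀ v‖ * ‖v‖ := by
      rw [norm_sq_eq_inner', inner_mv]
      calc ⟪v, mv M (mv Mᵀ v)⟫ ≤ ‖v‖ * ‖mv M (mv Mᵀ v)‖ := real_inner_le_norm _ _
        _ ≤ ‖v‖ * (spec M * ‖mv Mᵀ v‖) :=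
            mul_le_mul_of_nonneg_left (norm_mv_le _ _) (norm_nonneg v)
        _ = spec M * ‖mv Mᵀ v‖ * ‖v‖ := by ring
    have hpos : 0 < ‖mv Mᵀ v‖ := lt_of_le_of_ne (norm_nonneg _) (Ne.symm h0)
    nlinarith

lemma spec_transpose {a b : ℕ} (M : Matrix (Fin a) (Fin b) ℝ) : spec Mᵀ = spec M :=
  le_antisymm (spec_transpose_le M) (by simpa using spec_transpose_le Mᵀ)

lemma spec_le_one_of_orth {nn rr : ℕ} (Φ : Matrix (Fin nn) (Fin rr) ℝ) (hΦ : Φᵀ * Φ = 1) :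
    spec Φ ≤ 1 :=
  spec_le_of_bound _ zero_le_one (fun v => by rw [norm_mv_orth Φ hΦ, one_mul])

lemma selection_orth {dd mm : ℕ} (P : Matrix (Fin dd) (Fin mm) ℝ)
    (hP : ∃ ℘ : Fin mm → Fin dd, Function.Injective ℘ ∧
      ∀ i j, P i j = if i = ℘ j then 1 else 0) : Pᵀ * P = 1 := by
  obtain ⟨f, hf, hPf⟩ := hP
  ext j k
  simp only [Matrix.mul_apply, Matrix.transpose_apply, Matrix.one_apply, hPf]
  rcases eq_or_ne j k with rfl | hjk
  · simp
  · have : f j ≠ f k := fun hc => hjk (hf hc)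
    rw [Finset.sum_eq_zero, if_neg hjk]
    intro i _
    rcases eq_or_ne i (f j) with rfl | hij
    · simp [this]
    · simp [hij]

-- Pythagoras
lemma pythagoras {nn rr : ℕ} (Φ : Matrix (Fin nn) (Fin rr) ℝ) (hΦ : Φᵀ * Φ = 1)
    (u : Evec nn) (v : Evec rr) :
    ‖u - mv Φ (mv Φᵀ u)‖ ^ 2 + ‖mv Φᵀ u - v‖ ^ 2 = ‖u - mv Φ v‖ ^ 2 := by
  have hsplit : u - mv Φ v = (u - mv Φ (mv Φᵀ u)) + mv Φ (mv Φᵀ u - v) := by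
    rw [mv_sub]; abel
  have horth : ⟪u - mv Φ (mv Φᵀ u), mv Φ (mv Φᵀ u - v)⟫ = 0 := by
    rw [← inner_mv]
    have : mv Φᵀ (u - mv Φ (mv Φᵀ u)) = 0 := by
      rw [mv_sub, mv_mv, mv_mv, hΦ]
      simp [mv]
    rw [this, inner_zero_left]
  have := norm_add_sq_real (u - mv Φ (mv Φᵀ u)) (mv Φ (mv Φᵀ u - v))
  rw [← hsplit, horth, norm_mv_orth Φ hΦ] at this
  linarith

lemma continuous_of_lip' {E F : Type*} [NormedAddCommGroup E] [NormedAddCommGroup F]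
    {f : E → F} {K : ℝ} (h : ∀ a b, ‖f a - f b‖ ≤ K * ‖a - b‖) : Continuous f := by
  have : LipschitzWith ‖K‖₊ f := by
    apply LipschitzWith.of_dist_le_mul
    intro a b
    rw [dist_eq_norm, dist_eq_norm]
    calc ‖f a - f b‖ ≤ K * ‖a - b‖ := h a b
      _ ≤ ‖K‖ * ‖a - b‖ := mul_le_mul_of_nonneg_right (le_abs_self K) (norm_nonneg _)
      _ = ‖K‖₊ * ‖a - b‖ := by simp
  exact this.continuous

lemma continuous_mv {a b : ℕ} (M : Matrix (Fin a) (Fin b) ℝ) :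
    Continuous (fun v : Evec b => mv M v) := by
  have : (fun v : Evec b => mv M v) =
      fun v => LinearMap.toContinuousLinearMap (Matrix.toEuclideanLin M) v := rfl
  rw [this]
  exact (LinearMap.toContinuousLinearMap (Matrix.toEuclideanLin M)).continuous


-- pointwise key lemma
set_option maxHeartbeats 1000000 in
lemma key_pointwise {n r d m m0 : ℕ}
    (Φ : Matrix (Fin n) (Fin r) ℝ) (hΦ : Φᵀ * Φ = 1)
    (Q : Matrix (Fin n) (Fin n) ℝ) (c : Evec d)
    (Jh : Evec n → Matrix (Fin d) (Fin n) ℝ)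
    (gH : Evec n → Evec n) (hgH : ∀ p, gH p = mv Q p + mv (Jh p)ᵀ c)
    (CLipH : ℝ) (hLipH : ∀ a b : Evec n, ‖gH a - gH b‖ ≤ CLipH * ‖a - b‖)
    (CLipJ : ℝ) (hLipJ : ∀ a b : Evec n, spec (Jh a - Jh b) ≤ CLipJ * ‖a - b‖)
    (Ψ P : Matrix (Fin d) (Fin m0) ℝ)
    (hΨ : Ψᵀ * Ψ = 1) (hPo : Pᵀ * P = 1)
    (Pbb : Matrix (Fin d) (Fin d) ℝ) (hPbb : Pbb = Ψ * (Pᵀ * Ψ)⁻¹ * Pᵀ)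
    (Qr : Matrix (Fin r) (Fin r) ℝ) (hQrdef : Qr = Φᵀ * Q * Φ)
    (Br : Matrix (Fin r) (Fin m) ℝ)
    (C₄ C₅ C₆ C : ℝ)
    (hC₄ : C₄ = spec (Brᵀ * Φᵀ) * CLipH)
    (hC₅ : C₅ = spec Br * ‖c‖)
    (hC₆ : C₆ = spec (Brᵀ * Φᵀ) * (spec Q + CLipJ * spec ((Pᵀ * Ψ)⁻¹) * ‖c‖))
    (hC : C = 4 * max (max 1 (C₄ ^ 2)) (max (C₅ ^ 2) (C₆ ^ 2)))
    (u : Evec n) (v : Evec r) (Y : Evec m) :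
    ‖Y - mv Brᵀ (mv Qr v + mv Φᵀ (mv (Jh (mv Φ v))ᵀ (mv Pbbᵀ c)))‖ ^ 2 ≤
      C * (‖u - mv Φ v‖ ^ 2 + ‖Y - mv Brᵀ (mv Φᵀ (gH u))‖ ^ 2 +
        (spec ((1 - Pbb) * Jh (mv Φ (mv Φᵀ u)) * Φ)) ^ 2) := by
  set z : Evec n := mv Φ (mv Φᵀ u) with hz
  set w : Evec r := mv Φᵀ u - v with hw
  set t1 : Evec m := Y - mv Brᵀ (mv Φᵀ (gH u)) with ht1
  set t2 : Evec m := mv (Brᵀ * Φᵀ) (gH u - gH z) with ht2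
  set t3 : Evec m := mv (Brᵀ * ((1 - Pbb) * Jh z * Φ)ᵀ) c with ht3
  set t4 : Evec m := mv (Brᵀ * Φᵀ)
      (mv (Q * Φ) w + mv ((Jh z)ᵀ - (Jh (mv Φ v))ᵀ) (mv Pbbᵀ c)) with ht4
  have hiden : Y - mv Brᵀ (mv Qr v + mv Φᵀ (mv (Jh (mv Φ v))ᵀ (mv Pbbᵀ c)))
      = t1 + t2 + t3 + t4 := by
    rw [ht1, ht2, ht3, ht4, hw, hz, hgH u, hgH, hQrdef]
    simp only [mv_mv, mv_add, mv_sub, add_mv, sub_mv, Matrix.transpose_mul,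
      Matrix.transpose_one, Matrix.transpose_sub, Matrix.mul_sub, Matrix.sub_mul,
      Matrix.mul_add, Matrix.add_mul, Matrix.mul_one, Matrix.one_mul, Matrix.mul_assoc]
    abel
  -- norm bounds
  have hJn : ∀ a b : Evec n, 0 ≤ CLipJ * ‖a - b‖ :=
    fun a b => le_trans (spec_nonneg _) (hLipJ a b)
  have hb2 : ‖t2‖ ≤ C₄ * ‖u - z‖ := by
    rw [ht2, hC₄]
    calc ‖mv (Brᵀ * Φᵀ) (gH u - gH z)‖ ≤ spec (Brᵀ * Φᵀ) * ‖gH u - gH z‖ := norm_mv_le _ _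
      _ ≤ spec (Brᵀ * Φᵀ) * (CLipH * ‖u - z‖) :=
          mul_le_mul_of_nonneg_left (hLipH u z) (spec_nonneg _)
      _ = spec (Brᵀ * Φᵀ) * CLipH * ‖u - z‖ := by ring
  have hb3 : ‖t3‖ ≤ C₅ * spec ((1 - Pbb) * Jh z * Φ) := by
    rw [ht3, hC₅]
    calc ‖mv (Brᵀ * ((1 - Pbb) * Jh z * Φ)ᵀ) c‖
        ≤ spec (Brᵀ * ((1 - Pbb) * Jh z * Φ)ᵀ) * ‖c‖ := norm_mv_le _ _
      _ ≤ spec Brᵀ * spec ((1 - Pbb) * Jh z * Φ)ᵀ * ‖c‖ :=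
          mul_le_mul_of_nonneg_right (spec_mul_le _ _) (norm_nonneg c)
      _ = spec Br * ‖c‖ * spec ((1 - Pbb) * Jh z * Φ) := by
          rw [spec_transpose, spec_transpose]; ring
  have hb4 : ‖t4‖ ≤ C₆ * ‖w‖ := by
    rw [ht4, hC₆]
    have hQΦ : spec (Q * Φ) ≤ spec Q := by
      nlinarith [spec_mul_le Q Φ, spec_le_one_of_orth Φ hΦ, spec_nonneg Q, spec_nonneg (Q * Φ)]
    have h1 : ‖mv (Q * Φ) w‖ ≤ spec Q * ‖w‖ :=
      le_trans (norm_mv_le _ _) (mul_le_mul_of_nonneg_right hQΦ (norm_nonneg w))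
    have hΔ : spec ((Jh z)ᵀ - (Jh (mv Φ v))ᵀ) ≤ CLipJ * ‖w‖ := by
      rw [← Matrix.transpose_sub, spec_transpose]
      have := hLipJ z (mv Φ v)
      have hzv : z - mv Φ v = mv Φ w := by rw [hz, hw, mv_sub]
      rwa [hzv, norm_mv_orth Φ hΦ] at this
    have hPbbn : spec Pbbᵀ ≤ spec ((Pᵀ * Ψ)⁻¹) := by
      rw [spec_transpose, hPbb]
      have h1 := spec_mul_le (Ψ * (Pᵀ * Ψ)⁻¹) Pᵀ
      have h2 := spec_mul_le Ψ ((Pᵀ * Ψ)⁻¹)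
      have h3 : spec Pᵀ ≤ 1 := by
        rw [spec_transpose]
        exact spec_le_one_of_orth P hPo
      have h4 : spec Ψ ≤ 1 := spec_le_one_of_orth Ψ hΨ
      nlinarith [spec_nonneg (Ψ * (Pᵀ * Ψ)⁻¹), spec_nonneg ((Pᵀ * Ψ)⁻¹), spec_nonneg Ψ,
        spec_nonneg Pᵀ]
    have h2 : ‖mv ((Jh z)ᵀ - (Jh (mv Φ v))ᵀ) (mv Pbbᵀ c)‖ ≤
        CLipJ * ‖w‖ * (spec ((Pᵀ * Ψ)⁻¹) * ‖c‖) := by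
      calc ‖mv ((Jh z)ᵀ - (Jh (mv Φ v))ᵀ) (mv Pbbᵀ c)‖
          ≤ spec ((Jh z)ᵀ - (Jh (mv Φ v))ᵀ) * ‖mv Pbbᵀ c‖ := norm_mv_le _ _
        _ ≤ CLipJ * ‖w‖ * (spec ((Pᵀ * Ψ)⁻¹) * ‖c‖) := by
            have hq := norm_mv_le Pbbᵀ c
            have hq2 : ‖mv Pbbᵀ c‖ ≤ spec ((Pᵀ * Ψ)⁻¹) * ‖c‖ :=
              le_trans hq (mul_le_mul_of_nonneg_right hPbbn (norm_nonneg c))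
            have h0 : 0 ≤ CLipJ * ‖w‖ := by
              have := hJn z (mv Φ v)
              have hzv : z - mv Φ v = mv Φ w := by rw [hz, hw, mv_sub]
              rwa [hzv, norm_mv_orth Φ hΦ] at this
            exact mul_le_mul hΔ hq2 (norm_nonneg _) h0
    calc ‖t4‖ ≤ spec (Brᵀ * Φᵀ) *
        ‖mv (Q * Φ) w + mv ((Jh z)ᵀ - (Jh (mv Φ v))ᵀ) (mv Pbbᵀ c)‖ := norm_mv_le _ _
      _ ≤ spec (Brᵀ * Φᵀ) * (spec Q * ‖w‖ + CLipJ * ‖w‖ * (spec ((Pᵀ * Ψ)⁻¹) * ‖c‖)) := by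
          apply mul_le_mul_of_nonneg_left _ (spec_nonneg _)
          exact le_trans (norm_add_le _ _) (add_le_add h1 h2)
      _ = spec (Brᵀ * Φᵀ) * (spec Q + CLipJ * spec ((Pᵀ * Ψ)⁻¹) * ‖c‖) * ‖w‖ := by ring
  -- combine
  have hsum : ‖Y - mv Brᵀ (mv Qr v + mv Φᵀ (mv (Jh (mv Φ v))ᵀ (mv Pbbᵀ c)))‖
      ≤ ‖t1‖ + ‖t2‖ + ‖t3‖ + ‖t4‖ := by
    rw [hiden]
    calc ‖t1 + t2 + t3 + t4‖ ≤ ‖t1 + t2 + t3‖ + ‖t4‖ := norm_add_le _ _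
      _ ≤ ‖t1 + t2‖ + ‖t3‖ + ‖t4‖ := by linarith [norm_add_le (t1 + t2) t3]
      _ ≤ ‖t1‖ + ‖t2‖ + ‖t3‖ + ‖t4‖ := by linarith [norm_add_le t1 t2]
  have hsq : ‖Y - mv Brᵀ (mv Qr v + mv Φᵀ (mv (Jh (mv Φ v))ᵀ (mv Pbbᵀ c)))‖ ^ 2
      ≤ (‖t1‖ + ‖t2‖ + ‖t3‖ + ‖t4‖) ^ 2 :=
    pow_le_pow_left₀ (norm_nonneg _) hsum 2
  have hpyth := pythagoras Φ hΦ u v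
  set M : ℝ := max (max 1 (C₄ ^ 2)) (max (C₅ ^ 2) (C₆ ^ 2)) with hM
  have hM1 : (1 : ℝ) ≤ M := le_trans (le_max_left _ _) (le_max_left _ _)
  have hM4 : C₄ ^ 2 ≤ M := le_trans (le_max_right _ _) (le_max_left _ _)
  have hM5 : C₅ ^ 2 ≤ M := le_trans (le_max_left _ _) (le_max_right _ _)
  have hM6 : C₆ ^ 2 ≤ M := le_trans (le_max_right _ _) (le_max_right _ _)
  have hb2' : ‖t2‖ ^ 2 ≤ C₄ ^ 2 * ‖u - z‖ ^ 2 := by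
    rw [← mul_pow]; exact pow_le_pow_left₀ (norm_nonneg _) hb2 2
  have hb3' : ‖t3‖ ^ 2 ≤ C₅ ^ 2 * (spec ((1 - Pbb) * Jh z * Φ)) ^ 2 := by
    rw [← mul_pow]; exact pow_le_pow_left₀ (norm_nonneg _) hb3 2
  have hb4' : ‖t4‖ ^ 2 ≤ C₆ ^ 2 * ‖w‖ ^ 2 := by
    rw [← mul_pow]; exact pow_le_pow_left₀ (norm_nonneg _) hb4 2
  rw [hC]
  have h4sq : (‖t1‖ + ‖t2‖ + ‖t3‖ + ‖t4‖) ^ 2 ≤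
      4 * (‖t1‖ ^ 2 + ‖t2‖ ^ 2 + ‖t3‖ ^ 2 + ‖t4‖ ^ 2) := by
    nlinarith [sq_nonneg (‖t1‖ - ‖t2‖), sq_nonneg (‖t1‖ - ‖t3‖), sq_nonneg (‖t1‖ - ‖t4‖),
      sq_nonneg (‖t2‖ - ‖t3‖), sq_nonneg (‖t2‖ - ‖t4‖), sq_nonneg (‖t3‖ - ‖t4‖)]
  have e1 : ‖t1‖ ^ 2 ≤ M * ‖t1‖ ^ 2 := le_mul_of_one_le_left (sq_nonneg _) hM1
  have e2 : ‖t2‖ ^ 2 ≤ M * ‖u - z‖ ^ 2 :=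
    le_trans hb2' (mul_le_mul_of_nonneg_right hM4 (sq_nonneg _))
  have e3 : ‖t3‖ ^ 2 ≤ M * (spec ((1 - Pbb) * Jh z * Φ)) ^ 2 :=
    le_trans hb3' (mul_le_mul_of_nonneg_right hM5 (sq_nonneg _))
  have e4 : ‖t4‖ ^ 2 ≤ M * ‖w‖ ^ 2 :=
    le_trans hb4' (mul_le_mul_of_nonneg_right hM6 (sq_nonneg _))
  have hMp : M * ‖u - z‖ ^ 2 + M * ‖w‖ ^ 2 = M * ‖u - mv Φ v‖ ^ 2 := by
    rw [← mul_add, hpyth]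
  linarith [hsq, h4sq, e1, e2, e3, e4, hMp]

/-- Output error bound for the pH-OpInf-DEIM reduced-order
model: with `y_r(t) = B_rᵀ(Q_r x_r(t) + Φᵀ J_h(Φ x_r(t))ᵀ ℙᵀ c)`, the squared
`L²` output error is bounded by `C = 4·max{1, C₄², C₅², C₆²}` times the sum of
the state approximation, optimization and hyper-reduction errors. -/
theorem output_error_bound_pH_OpInf_DEIM {n r d m m0 : ℕ}
    (T : ℝ) (hT : 0 < T)
    (Φ : Matrix (Fin n) (Fin r) ℝ) (hΦ : Φᵀ * Φ = 1)
    (Q : Matrix (Fin n) (Fin n) ℝ) (hQ : Qᵀ = Q) (c : Evec d)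
    (h : Evec n → Evec d) (Jh : Evec n → Matrix (Fin d) (Fin n) ℝ)
    (hJac : ∀ p, HasFDerivAt h
      (LinearMap.toContinuousLinearMap (Matrix.toEuclideanLin (Jh p))) p)
    (gH : Evec n → Evec n) (hgH : ∀ p, gH p = mv Q p + mv (Jh p)ᵀ c)
    (CLipH : ℝ) (hLipH : ∀ a b : Evec n, ‖gH a - gH b‖ ≤ CLipH * ‖a - b‖)
    (CLipJ : ℝ) (hLipJ : ∀ a b : Evec n, spec (Jh a - Jh b) ≤ CLipJ * ‖a - b‖)
    (Ψ P : Matrix (Fin d) (Fin m0) ℝ)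
    (hΨ : Ψᵀ * Ψ = 1)
    (hP : ∃ ℘ : Fin m0 → Fin d, Function.Injective ℘ ∧
      ∀ i j, P i j = if i = ℘ j then 1 else 0)
    (hPΨ : IsUnit (Pᵀ * Ψ))
    (Pbb : Matrix (Fin d) (Fin d) ℝ) (hPbb : Pbb = Ψ * (Pᵀ * Ψ)⁻¹ * Pᵀ)
    (Qr : Matrix (Fin r) (Fin r) ℝ) (hQrdef : Qr = Φᵀ * Q * Φ)
    (Br : Matrix (Fin r) (Fin m) ℝ)
    (x : ℝ → Evec n) (hx : ContinuousOn x (Set.Icc (0 : ℝ) T))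
    (y : ℝ → Evec m) (hy : ContinuousOn y (Set.Icc (0 : ℝ) T))
    (xr : ℝ → Evec r) (hxr : ContinuousOn xr (Set.Icc (0 : ℝ) T))
    (yr : ℝ → Evec m)
    (hyr : ∀ t, yr t = mv Brᵀ (mv Qr (xr t) + mv Φᵀ (mv (Jh (mv Φ (xr t)))ᵀ (mv Pbbᵀ c))))
    (C₄ C₅ C₆ C : ℝ)
    (hC₄ : C₄ = spec (Brᵀ * Φᵀ) * CLipH)
    (hC₅ : C₅ = spec Br * ‖c‖)
    (hC₆ : C₆ = spec (Brᵀ * Φᵀ) * (spec Q + CLipJ * spec ((Pᵀ * Ψ)⁻¹) * ‖c‖))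
    (hC : C = 4 * max (max 1 (C₄ ^ 2)) (max (C₅ ^ 2) (C₆ ^ 2))) :
    ∫ t in (0 : ℝ)..T, ‖y t - yr t‖ ^ 2 ≤
      C * ((∫ t in (0 : ℝ)..T, ‖x t - mv Φ (xr t)‖ ^ 2)
        + (∫ t in (0 : ℝ)..T, ‖y t - mv Brᵀ (mv Φᵀ (gH (x t)))‖ ^ 2)
        + (∫ t in (0 : ℝ)..T,
            (spec ((1 - Pbb) * Jh (mv Φ (mv Φᵀ (x t))) * Φ)) ^ 2)) := by
  have huIcc : Set.uIcc (0 : ℝ) T = Set.Icc 0 T := Set.uIcc_of_le hT.le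
  -- continuity facts
  have hgHc : Continuous gH := continuous_of_lip' hLipH
  have hFc : Continuous (fun u : Evec n => mv (Jh u)ᵀ (mv Pbbᵀ c)) := by
    apply continuous_of_lip' (K := CLipJ * ‖mv Pbbᵀ c‖)
    intro a b
    rw [← sub_mv]
    calc ‖mv ((Jh a)ᵀ - (Jh b)ᵀ) (mv Pbbᵀ c)‖
        ≤ spec ((Jh a)ᵀ - (Jh b)ᵀ) * ‖mv Pbbᵀ c‖ := norm_mv_le _ _
      _ = spec (Jh a - Jh b) * ‖mv Pbbᵀ c‖ := by rw [← Matrix.transpose_sub, spec_transpose]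
      _ ≤ CLipJ * ‖a - b‖ * ‖mv Pbbᵀ c‖ :=
          mul_le_mul_of_nonneg_right (hLipJ a b) (norm_nonneg _)
      _ = CLipJ * ‖mv Pbbᵀ c‖ * ‖a - b‖ := by ring
  have hF2lip : ∀ a b : Evec n, ‖(fun u : Evec n => spec ((1 - Pbb) * Jh u * Φ)) a -
      (fun u : Evec n => spec ((1 - Pbb) * Jh u * Φ)) b‖ ≤
      spec (1 - Pbb) * CLipJ * ‖a - b‖ := by
    have hhalf : ∀ a b : Evec n, spec ((1 - Pbb) * Jh a * Φ) - spec ((1 - Pbb) * Jh b * Φ) ≤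
        spec (1 - Pbb) * CLipJ * ‖a - b‖ := by
      intro a b
      have hdiff : (1 - Pbb) * Jh a * Φ - (1 - Pbb) * Jh b * Φ =
          (1 - Pbb) * (Jh a - Jh b) * Φ := by rw [Matrix.mul_assoc, Matrix.mul_assoc, ← Matrix.mul_sub, ← Matrix.sub_mul, Matrix.mul_assoc]
      have h1 := spec_sub_le ((1 - Pbb) * Jh a * Φ) ((1 - Pbb) * Jh b * Φ)
      rw [hdiff] at h1
      have h2 := spec_mul_le ((1 - Pbb) * (Jh a - Jh b)) Φ
      have h3 := spec_mul_le (1 - Pbb) (Jh a - Jh b)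
      have h4 := spec_le_one_of_orth Φ hΦ
      have h5 := hLipJ a b
      nlinarith [spec_nonneg ((1 - Pbb) * (Jh a - Jh b)), spec_nonneg (1 - Pbb),
        spec_nonneg (Jh a - Jh b), spec_nonneg Φ, norm_nonneg (a - b)]
    intro a b
    rw [Real.norm_eq_abs, abs_sub_le_iff]
    exact ⟨hhalf a b, by rw [norm_sub_rev] at *; exact hhalf b a⟩
  have hF2c : Continuous (fun u : Evec n => spec ((1 - Pbb) * Jh u * Φ)) :=
    continuous_of_lip' hF2lip
  have hyrc : ContinuousOn yr (Set.Icc (0 : ℝ) T) := by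
    have : ContinuousOn (fun t =>
        mv Brᵀ (mv Qr (xr t) + mv Φᵀ (mv (Jh (mv Φ (xr t)))ᵀ (mv Pbbᵀ c))))
        (Set.Icc (0 : ℝ) T) := by
      apply (continuous_mv Brᵀ).comp_continuousOn
      apply ContinuousOn.add
      · exact (continuous_mv Qr).comp_continuousOn hxr
      · exact (continuous_mv Φᵀ).comp_continuousOn
          (hFc.comp_continuousOn ((continuous_mv Φ).comp_continuousOn hxr))
    exact (funext hyr : yr = _) ▸ this
  -- integrability
  have hfint : IntervalIntegrable (fun t => ‖y t - yr t‖ ^ 2) volume 0 T := by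
    apply ContinuousOn.intervalIntegrable
    rw [huIcc]
    exact ((hy.sub hyrc).norm.pow 2)
  have hg1int : IntervalIntegrable (fun t => ‖x t - mv Φ (xr t)‖ ^ 2) volume 0 T := by
    apply ContinuousOn.intervalIntegrable
    rw [huIcc]
    exact ((hx.sub ((continuous_mv Φ).comp_continuousOn hxr)).norm.pow 2)
  have hg2int : IntervalIntegrable
      (fun t => ‖y t - mv Brᵀ (mv Φᵀ (gH (x t)))‖ ^ 2) volume 0 T := by
    apply ContinuousOn.intervalIntegrable
    rw [huIcc]
    exact ((hy.sub ((continuous_mv Brᵀ).comp_continuousOn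
      ((continuous_mv Φᵀ).comp_continuousOn (hgHc.comp_continuousOn hx)))).norm.pow 2)
  have hg3int : IntervalIntegrable
      (fun t => (spec ((1 - Pbb) * Jh (mv Φ (mv Φᵀ (x t))) * Φ)) ^ 2) volume 0 T := by
    apply ContinuousOn.intervalIntegrable
    rw [huIcc]
    exact ((hF2c.comp_continuousOn
      ((continuous_mv Φ).comp_continuousOn ((continuous_mv Φᵀ).comp_continuousOn hx))).pow 2)
  have hPo : Pᵀ * P = 1 := selection_orth P hP
  have key : ∀ t, ‖y t - yr t‖ ^ 2 ≤
      C * (‖x t - mv Φ (xr t)‖ ^ 2 + ‖y t - mv Brᵀ (mv Φᵀ (gH (x t)))‖ ^ 2 +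
        (spec ((1 - Pbb) * Jh (mv Φ (mv Φᵀ (x t))) * Φ)) ^ 2) := by
    intro t
    rw [hyr t]
    exact key_pointwise Φ hΦ Q c Jh gH hgH CLipH hLipH CLipJ hLipJ Ψ P hΨ hPo Pbb hPbb
      Qr hQrdef Br C₄ C₅ C₆ C hC₄ hC₅ hC₆ hC (x t) (xr t) (y t)
  have hGint : IntervalIntegrable (fun t =>
      C * (‖x t - mv Φ (xr t)‖ ^ 2 + ‖y t - mv Brᵀ (mv Φᵀ (gH (x t)))‖ ^ 2 +
        (spec ((1 - Pbb) * Jh (mv Φ (mv Φᵀ (x t))) * Φ)) ^ 2)) volume 0 T :=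
    ((hg1int.add hg2int).add hg3int).const_mul C
  calc ∫ t in (0 : ℝ)..T, ‖y t - yr t‖ ^ 2
      ≤ ∫ t in (0 : ℝ)..T,
        C * (‖x t - mv Φ (xr t)‖ ^ 2 + ‖y t - mv Brᵀ (mv Φᵀ (gH (x t)))‖ ^ 2 +
          (spec ((1 - Pbb) * Jh (mv Φ (mv Φᵀ (x t))) * Φ)) ^ 2) :=
        intervalIntegral.integral_mono_on hT.le hfint hGint (fun t _ => key t)
    _ = C * ((∫ t in (0 : ℝ)..T, ‖x t - mv Φ (xr t)‖ ^ 2)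
        + (∫ t in (0 : ℝ)..T, ‖y t - mv Brᵀ (mv Φᵀ (gH (x t)))‖ ^ 2)
        + (∫ t in (0 : ℝ)..T,
            (spec ((1 - Pbb) * Jh (mv Φ (mv Φᵀ (x t))) * Φ)) ^ 2)) := by
        rw [intervalIntegral.integral_const_mul,
          intervalIntegral.integral_add (hg1int.add hg2int) hg3int,
          intervalIntegral.integral_add hg1int hg2int]
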